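/- Let e ∈ A be a half-axis, u₁ ∈ U := A_{1/2}(e) and z ∈ Z := A_0(e). Then u₁²(u₁z) = u₁(u₁²z). -/

import Mathlib

/-- `A_λ(e)`-based definition of a half-axis in a commutative non-associative `F`-algebra `A`:
`e` is idempotent, `A_1(e) = F e`, `A = F e ⊕ A_{1/2}(e) ⊕ A_0(e)`, and the fusion rules
`Z Z ⊆ Z`, `U U ⊆ F e + Z`, `U Z ⊆ U` hold, where `U = A_{1/2}(e)` and `Z = A_0(e)`. -/
structure IsHalfAxis (F : Type*) [Field F] {A : Type*} [NonUnitalNonAssocCommRing A]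
    [Module F A] [SMulCommClass F A A] [IsScalarTower F A A] (e : A) : Prop where
  idem : e * e = e
  eig_one : {y : A | e * y = y} = {y : A | ∃ c : F, y = c • e}
  decomp : ∀ x : A, ∃ (c : F) (u z : A),
      e * u = (2⁻¹ : F) • u ∧ e * z = 0 ∧ x = c • e + u + z
  indep : ∀ (c : F) (u z : A), e * u = (2⁻¹ : F) • u → e * z = 0 →
      c • e + u + z = 0 → c = 0 ∧ u = 0 ∧ z = 0
  fusionZZ : ∀ z z' : A, e * z = 0 → e * z' = 0 → e * (z * z') = 0
  fusionUU : ∀ u u' : A, e * u = (2⁻¹ : F) • u → e * u' = (2⁻¹ : F) • u' →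
      ∃ (c : F) (z : A), e * z = 0 ∧ u * u' = c • e + z
  fusionUZ : ∀ u z : A, e * u = (2⁻¹ : F) • u → e * z = 0 →
      e * (u * z) = (2⁻¹ : F) • (u * z)

set_option maxHeartbeats 4000000 in
theorem stmt14 {F : Type*} [Field F] {A : Type*} [NonUnitalNonAssocCommRing A]
    [Module F A] [SMulCommClass F A A] [IsScalarTower F A A]
    (h2 : (2 : F) ≠ 0) (hF : 3 < Cardinal.mk F)
    (hid1 : ∀ x : A, (x * x) * (x * x) = ((x * x) * x) * x)
    (hid2 : ∀ x : A, ((x * x) * x) * (x * x) = x * (((x * x) * x) * x))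
    (e : A) (he : IsHalfAxis F e)
    (u₁ z : A) (hu₁ : e * u₁ = (2⁻¹ : F) • u₁) (hz : e * z = 0) :
    (u₁ * u₁) * (u₁ * z) = u₁ * ((u₁ * u₁) * z) := by

  obtain ⟨ca, w, hz_w, hd_w⟩ := he.fusionUU u₁ u₁ hu₁ hu₁
  have ef3 : e * (u₁ * z) = (2⁻¹:F) • (u₁ * z) := he.fusionUZ u₁ z hu₁ hz
  have ef2 : e * ((u₁ * z) * z) = (2⁻¹:F) • ((u₁ * z) * z) := he.fusionUZ (u₁ * z) z ef3 hz
  have ef1 : e * (((u₁ * z) * z) * z) = (2⁻¹:F) • (((u₁ * z) * z) * z) := he.fusionUZ ((u₁ * z) * z) z ef2 hz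
  have ef6 : e * (z * z) = 0 := he.fusionZZ z z hz hz
  have ef5 : e * ((z * z) * u₁) = (2⁻¹:F) • ((z * z) * u₁) := by rw [mul_comm (z * z) u₁]; exact he.fusionUZ u₁ (z * z) hu₁ ef6
  have ef4 : e * (((z * z) * u₁) * z) = (2⁻¹:F) • (((z * z) * u₁) * z) := he.fusionUZ ((z * z) * u₁) z ef5 hz
  have ef8 : e * ((z * z) * z) = 0 := he.fusionZZ (z * z) z ef6 hz
  have ef7 : e * (((z * z) * z) * u₁) = (2⁻¹:F) • (((z * z) * z) * u₁) := by rw [mul_comm ((z * z) * z) u₁]; exact he.fusionUZ u₁ ((z * z) * z) hu₁ ef8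
  have ef10 : e * (w * z) = 0 := he.fusionZZ w z hz_w hz
  have ef9 : e * ((w * z) * u₁) = (2⁻¹:F) • ((w * z) * u₁) := by rw [mul_comm (w * z) u₁]; exact he.fusionUZ u₁ (w * z) hu₁ ef10
  have ef11 : e * (w * u₁) = (2⁻¹:F) • (w * u₁) := by rw [mul_comm w u₁]; exact he.fusionUZ u₁ w hu₁ hz_w
  have ef12 : e * (((z * z) * z) * z) = 0 := he.fusionZZ ((z * z) * z) z ef8 hz
  have ef13 : e * ((w * z) * z) = 0 := he.fusionZZ (w * z) z ef10 hz
  obtain ⟨cb, w1, hz_w1, hd_w1⟩ := he.fusionUU (u₁ * z) u₁ ef3 hu₁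
  obtain ⟨c2, z2, hz_z2, hd_z2⟩ := he.fusionUU (w * u₁) u₁ ef11 hu₁
  obtain ⟨c3, z3, hz_z3, hd_z3⟩ := he.fusionUU ((u₁ * z) * z) u₁ ef2 hu₁
  obtain ⟨c4, z4, hz_z4, hd_z4⟩ := he.fusionUU ((z * z) * u₁) u₁ ef5 hu₁
  obtain ⟨c5, z5, hz_z5, hd_z5⟩ := he.fusionUU (u₁ * z) (u₁ * z) ef3 ef3
  obtain ⟨c6, z6, hz_z6, hd_z6⟩ := he.fusionUU (((u₁ * z) * z) * z) u₁ ef1 hu₁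
  obtain ⟨c7, z7, hz_z7, hd_z7⟩ := he.fusionUU (((z * z) * u₁) * z) u₁ ef4 hu₁
  obtain ⟨c8, z8, hz_z8, hd_z8⟩ := he.fusionUU ((u₁ * z) * z) (u₁ * z) ef2 ef3
  obtain ⟨c9, z9, hz_z9, hd_z9⟩ := he.fusionUU (((z * z) * z) * u₁) u₁ ef7 hu₁
  obtain ⟨c10, z10, hz_z10, hd_z10⟩ := he.fusionUU ((w * z) * u₁) u₁ ef9 hu₁
  obtain ⟨c11, z11, hz_z11, hd_z11⟩ := he.fusionUU ((z * z) * u₁) (u₁ * z) ef5 ef3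
  have cm1 : (((u₁ * z) * z) * z) * e = e * (((u₁ * z) * z) * z) := mul_comm _ _
  have cm2 : u₁ * (((u₁ * z) * z) * z) = (((u₁ * z) * z) * z) * u₁ := mul_comm _ _
  have cm3 : z * (((u₁ * z) * z) * z) = (((u₁ * z) * z) * z) * z := mul_comm _ _
  have cm4 : (((z * z) * u₁) * z) * e = e * (((z * z) * u₁) * z) := mul_comm _ _
  have cm5 : u₁ * (((z * z) * u₁) * z) = (((z * z) * u₁) * z) * u₁ := mul_comm _ _
  have cm6 : z * (((z * z) * u₁) * z) = (((z * z) * u₁) * z) * z := mul_comm _ _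
  have cm7 : (u₁ * z) * ((u₁ * z) * z) = ((u₁ * z) * z) * (u₁ * z) := mul_comm _ _
  have cm8 : (z * z) * ((u₁ * z) * z) = ((u₁ * z) * z) * (z * z) := mul_comm _ _
  have cm9 : w * ((u₁ * z) * z) = ((u₁ * z) * z) * w := mul_comm _ _
  have cm10 : ((u₁ * z) * z) * e = e * ((u₁ * z) * z) := mul_comm _ _
  have cm11 : u₁ * ((u₁ * z) * z) = ((u₁ * z) * z) * u₁ := mul_comm _ _
  have cm12 : z * ((u₁ * z) * z) = ((u₁ * z) * z) * z := mul_comm _ _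
  have cm13 : (((z * z) * z) * u₁) * e = e * (((z * z) * z) * u₁) := mul_comm _ _
  have cm14 : u₁ * (((z * z) * z) * u₁) = (((z * z) * z) * u₁) * u₁ := mul_comm _ _
  have cm15 : z * (((z * z) * z) * u₁) = (((z * z) * z) * u₁) * z := mul_comm _ _
  have cm16 : ((w * z) * u₁) * e = e * ((w * z) * u₁) := mul_comm _ _
  have cm17 : u₁ * ((w * z) * u₁) = ((w * z) * u₁) * u₁ := mul_comm _ _
  have cm18 : z * ((w * z) * u₁) = ((w * z) * u₁) * z := mul_comm _ _
  have cm19 : (u₁ * z) * ((z * z) * u₁) = ((z * z) * u₁) * (u₁ * z) := mul_comm _ _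
  have cm20 : (z * z) * ((z * z) * u₁) = ((z * z) * u₁) * (z * z) := mul_comm _ _
  have cm21 : w * ((z * z) * u₁) = ((z * z) * u₁) * w := mul_comm _ _
  have cm22 : ((z * z) * u₁) * e = e * ((z * z) * u₁) := mul_comm _ _
  have cm23 : u₁ * ((z * z) * u₁) = ((z * z) * u₁) * u₁ := mul_comm _ _
  have cm24 : z * ((z * z) * u₁) = ((z * z) * u₁) * z := mul_comm _ _
  have cm25 : (w * u₁) * e = e * (w * u₁) := mul_comm _ _
  have cm26 : u₁ * (w * u₁) = (w * u₁) * u₁ := mul_comm _ _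
  have cm27 : z * (w * u₁) = (w * u₁) * z := mul_comm _ _
  have cm28 : ((z * z) * z) * (u₁ * z) = (u₁ * z) * ((z * z) * z) := mul_comm _ _
  have cm29 : (w * z) * (u₁ * z) = (u₁ * z) * (w * z) := mul_comm _ _
  have cm30 : (z * z) * (u₁ * z) = (u₁ * z) * (z * z) := mul_comm _ _
  have cm31 : w * (u₁ * z) = (u₁ * z) * w := mul_comm _ _
  have cm32 : (u₁ * z) * e = e * (u₁ * z) := mul_comm _ _
  have cm33 : u₁ * (u₁ * z) = (u₁ * z) * u₁ := mul_comm _ _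
  have cm34 : z * (u₁ * z) = (u₁ * z) * z := mul_comm _ _
  have cm35 : (((z * z) * z) * z) * e = e * (((z * z) * z) * z) := mul_comm _ _
  have cm36 : u₁ * (((z * z) * z) * z) = (((z * z) * z) * z) * u₁ := mul_comm _ _
  have cm37 : z * (((z * z) * z) * z) = (((z * z) * z) * z) * z := mul_comm _ _
  have cm38 : ((w * z) * z) * e = e * ((w * z) * z) := mul_comm _ _
  have cm39 : u₁ * ((w * z) * z) = ((w * z) * z) * u₁ := mul_comm _ _
  have cm40 : z * ((w * z) * z) = ((w * z) * z) * z := mul_comm _ _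
  have cm41 : (z * z) * ((z * z) * z) = ((z * z) * z) * (z * z) := mul_comm _ _
  have cm42 : w * ((z * z) * z) = ((z * z) * z) * w := mul_comm _ _
  have cm43 : ((z * z) * z) * e = e * ((z * z) * z) := mul_comm _ _
  have cm44 : u₁ * ((z * z) * z) = ((z * z) * z) * u₁ := mul_comm _ _
  have cm45 : z * ((z * z) * z) = ((z * z) * z) * z := mul_comm _ _
  have cm46 : (z * z) * (w * z) = (w * z) * (z * z) := mul_comm _ _
  have cm47 : w * (w * z) = (w * z) * w := mul_comm _ _
  have cm48 : (w * z) * e = e * (w * z) := mul_comm _ _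
  have cm49 : u₁ * (w * z) = (w * z) * u₁ := mul_comm _ _
  have cm50 : z * (w * z) = (w * z) * z := mul_comm _ _
  have cm51 : w * (z * z) = (z * z) * w := mul_comm _ _
  have cm52 : (z * z) * e = e * (z * z) := mul_comm _ _
  have cm53 : u₁ * (z * z) = (z * z) * u₁ := mul_comm _ _
  have cm54 : z * (z * z) = (z * z) * z := mul_comm _ _
  have cm55 : z3 * e = e * z3 := mul_comm _ _
  have cm56 : u₁ * z3 = z3 * u₁ := mul_comm _ _
  have cm57 : z * z3 = z3 * z := mul_comm _ _
  have cm58 : z4 * e = e * z4 := mul_comm _ _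
  have cm59 : u₁ * z4 = z4 * u₁ := mul_comm _ _
  have cm60 : z * z4 = z4 * z := mul_comm _ _
  have cm61 : w1 * e = e * w1 := mul_comm _ _
  have cm62 : u₁ * w1 = w1 * u₁ := mul_comm _ _
  have cm63 : z * w1 = w1 * z := mul_comm _ _
  have cm64 : w * e = e * w := mul_comm _ _
  have cm65 : u₁ * w = w * u₁ := mul_comm _ _
  have cm66 : z * w = w * z := mul_comm _ _
  have cm67 : u₁ * e = e * u₁ := mul_comm _ _
  have cm68 : z * e = e * z := mul_comm _ _
  have cm69 : z * u₁ = u₁ * z := mul_comm _ _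
  have h4 : (4:F) ≠ 0 := by
    have h := pow_ne_zero 2 h2
    norm_num at h
    exact h
  have h8 : (8:F) ≠ 0 := by
    have h := pow_ne_zero 3 h2
    norm_num at h
    exact h
  have h16 : (16:F) ≠ 0 := by
    have h := pow_ne_zero 4 h2
    norm_num at h
    exact h
  have h32 : (32:F) ≠ 0 := by
    have h := pow_ne_zero 5 h2
    norm_num at h
    exact h
  have h64 : (64:F) ≠ 0 := by
    have h := pow_ne_zero 6 h2
    norm_num at h
    exact h
  have h128 : (128:F) ≠ 0 := by
    have h := pow_ne_zero 7 h2
    norm_num at h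
    exact h
  have h256 : (256:F) ≠ 0 := by
    have h := pow_ne_zero 8 h2
    norm_num at h
    exact h
  have h512 : (512:F) ≠ 0 := by
    have h := pow_ne_zero 9 h2
    norm_num at h
    exact h
  have h1024 : (1024:F) ≠ 0 := by
    have h := pow_ne_zero 10 h2
    norm_num at h
    exact h
  have h2048 : (2048:F) ≠ 0 := by
    have h := pow_ne_zero 11 h2
    norm_num at h
    exact h
  have h4096 : (4096:F) ≠ 0 := by
    have h := pow_ne_zero 12 h2
    norm_num at h
    exact h
  have h8192 : (8192:F) ≠ 0 := by
    have h := pow_ne_zero 13 h2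
    norm_num at h
    exact h
  have h16384 : (16384:F) ≠ 0 := by
    have h := pow_ne_zero 14 h2
    norm_num at h
    exact h
  have h32768 : (32768:F) ≠ 0 := by
    have h := pow_ne_zero 15 h2
    norm_num at h
    exact h
  obtain ⟨t₀, ht0, ht1, htm1⟩ : ∃ t : F, t ≠ 0 ∧ t ≠ 1 ∧ t ≠ -1 := by
    by_contra hcon; push_neg at hcon
    have hsub : (Set.univ : Set F) ⊆ {0, 1, -1} := by
      intro x _
      by_cases hx0 : x = 0; · simp [hx0]
      by_cases hx1 : x = 1; · simp [hx1]
      have := hcon x hx0 hx1; simp [this]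
    have hle : Cardinal.mk F ≤ 3 := by
      calc Cardinal.mk F = Cardinal.mk (Set.univ : Set F) := (Cardinal.mk_univ).symm
        _ ≤ Cardinal.mk ({0,1,-1} : Set F) := Cardinal.mk_le_mk_of_subset hsub
        _ ≤ 3 := by
          refine le_trans (Cardinal.mk_insert_le) ?_
          refine le_trans (add_le_add Cardinal.mk_insert_le le_rfl) ?_
          rw [Cardinal.mk_singleton]
          norm_num
    exact absurd (lt_of_lt_of_le hF hle) (lt_irrefl _)
  have htns : t₀^3 - t₀ ≠ 0 := by
    have : t₀^3 - t₀ = t₀ * (t₀ - 1) * (t₀ + 1) := by ring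
    rw [this]
    exact mul_ne_zero (mul_ne_zero ht0 (sub_ne_zero.mpr ht1)) (by intro hx; exact htm1 (by linear_combination hx))
  have h10 := hid1 u₁
  have h11 := hid1 (u₁ + e)
  simp only [mul_add, add_mul, smul_mul_assoc, mul_smul_comm, smul_smul, smul_add, smul_zero, mul_zero, zero_mul, add_zero, zero_add, he.idem, ef1, ef4, ef2, ef7, ef9, ef5, ef11, ef3, ef12, ef13, ef8, ef10, ef6, hz_z3, hz_z4, hz_w1, hz_w, hu₁, hz, hd_w, hd_w1, hd_z2, hd_z3, hd_z4, hd_z5, cm1, cm2, cm3, cm4, cm5, cm6, cm7, cm8, cm9, cm10, cm11, cm12, cm13, cm14, cm15, cm16, cm17, cm18, cm19, cm20, cm21, cm22, cm23, cm24, cm25, cm26, cm27, cm28, cm29, cm30, cm31, cm32, cm33, cm34, cm35, cm36, cm37, cm38, cm39, cm40, cm41, cm42, cm43, cm44, cm45, cm46, cm47, cm48, cm49, cm50, cm51, cm52, cm53, cm54, cm55, cm56, cm57, cm58, cm59, cm60, cm61, cm62, cm63, cm64, cm65, cm66, cm67, cm68, cm69] at h10 h11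
  have hm : w * u₁ = (2⁻¹ * ca) • u₁ := by
    linear_combination (norm := (match_scalars <;> ring_nf <;> (try field_simp [h2, h4, h8, h16, h32, h64, h128, h256, h512, h1024, h2048, h4096, h8192, h16384, h32768]) <;> ring1)) (2:F) • h11 - (2:F) • h10
  have g11 := hid1 (u₁ + e + z)
  have g01 := hid1 (u₁ + z)
  have g1m := hid1 (u₁ + e + (-1:F) • z)
  have g0m := hid1 (u₁ + (-1:F) • z)
  simp only [mul_add, add_mul, smul_mul_assoc, mul_smul_comm, smul_smul, smul_add, smul_zero, mul_zero, zero_mul, add_zero, zero_add, he.idem, ef1, ef4, ef2, ef7, ef9, ef5, ef11, ef3, ef12, ef13, ef8, ef10, ef6, hz_z3, hz_z4, hz_w1, hz_w, hu₁, hz, hd_w, hd_w1, hd_z2, hd_z3, hd_z4, hd_z5, cm1, cm2, cm3, cm4, cm5, cm6, cm7, cm8, cm9, cm10, cm11, cm12, cm13, cm14, cm15, cm16, cm17, cm18, cm19, cm20, cm21, cm22, cm23, cm24, cm25, cm26, cm27, cm28, cm29, cm30, cm31, cm32, cm33, cm34, cm35, cm36, cm37, cm38, cm39, cm40, cm41,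 cm42, cm43, cm44, cm45, cm46, cm47, cm48, cm49, cm50, cm51, cm52, cm53, cm54, cm55, cm56, cm57, cm58, cm59, cm60, cm61, cm62, cm63, cm64, cm65, cm66, cm67, cm68, cm69] at g11 g01 g1m g0m
  have hrel2 : w * z = (2:F) • w1 := by
    linear_combination (norm := (match_scalars <;> ring_nf <;> (try field_simp [h2, h4, h8, h16, h32, h64, h128, h256, h512, h1024, h2048, h4096, h8192, h16384, h32768]) <;> ring1)) (-(2⁻¹:F)) • g11 + (2⁻¹:F) • g01 + (2⁻¹:F) • g1m - (2⁻¹:F) • g0m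
  have hw1 : w1 = (2⁻¹:F) • (w * z) := by rw [hrel2, smul_smul, inv_mul_cancel₀ h2, one_smul]
  have Hp1 := hid1 (u₁ + (1:F) • z)
  have Hm1 := hid1 (u₁ + (-1:F) • z)
  have Hpt := hid1 (u₁ + t₀ • z)
  have Hmt := hid1 (u₁ + (-t₀) • z)
  simp only [mul_add, add_mul, smul_mul_assoc, mul_smul_comm, smul_smul, smul_add, smul_zero, mul_zero, zero_mul, add_zero, zero_add, he.idem, ef1, ef4, ef2, ef7, ef9, ef5, ef11, ef3, ef12, ef13, ef8, ef10, ef6, hz_z3, hz_z4, hz_w1, hz_w, hu₁, hz, hd_w, hd_z3, hd_z4, hd_z5, hd_z6, hd_z7, hd_z8, hd_z9, hd_z10, hd_z11, hm, hd_w1, hw1, cm1, cm2, cm3, cm4, cm5, cm6, cm7, cm8, cm9, cm10, cm11, cm12, cm13, cm14, cm15, cm16, cm17, cm18, cm19, cm20, cm21, cm22, cm23, cm24, cm25, cm26, cm27, cm28, cm29, cm30, cm31, cm32, cm33, cm34, cm35, cm36, cm37, cm38, cm39, cm40, cm41, cm42, cm43, cm44, cm45, cm46, cm47, cm48, cm49,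 cm50, cm51, cm52, cm53, cm54, cm55, cm56, cm57, cm58, cm59, cm60, cm61, cm62, cm63, cm64, cm65, cm66, cm67, cm68, cm69] at Hp1 Hm1 Hpt Hmt
  have hA1 : ((((4 : F))) • ((u₁ * z) * w) + (((-2 : F))) • ((w * z) * u₁) + (((1 : F) * ca)) • (u₁ * z) + (((-1 : F) * cb)) • u₁) + ((((-2 : F))) • (((u₁ * z) * z) * z) + (((-1 : F))) • (((z * z) * u₁) * z) + (((4 : F))) • ((u₁ * z) * (z * z)) + (((-1 : F))) • (((z * z) * z) * u₁)) = 0 := by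
    linear_combination (norm := (match_scalars <;> ring_nf <;> (try field_simp [h2, h4, h8, h16, h32, h64, h128, h256, h512, h1024, h2048, h4096, h8192, h16384, h32768]) <;> ring1)) (2⁻¹:F) • Hp1 - (2⁻¹:F) • Hm1
  have hAt : t₀ • ((((4 : F))) • ((u₁ * z) * w) + (((-2 : F))) • ((w * z) * u₁) + (((1 : F) * ca)) • (u₁ * z) + (((-1 : F) * cb)) • u₁) + t₀^3 • ((((-2 : F))) • (((u₁ * z) * z) * z) + (((-1 : F))) • (((z * z) * u₁) * z) + (((4 : F))) • ((u₁ * z) * (z * z)) + (((-1 : F))) • (((z * z) * z) * u₁)) = 0 := by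
    linear_combination (norm := (match_scalars <;> ring_nf <;> (try field_simp [h2, h4, h8, h16, h32, h64, h128, h256, h512, h1024, h2048, h4096, h8192, h16384, h32768]) <;> ring1)) (2⁻¹:F) • Hpt - (2⁻¹:F) • Hmt
  have hA0 : (t₀^3 - t₀) • (((((4 : F))) • ((u₁ * z) * w) + (((-2 : F))) • ((w * z) * u₁) + (((1 : F) * ca)) • (u₁ * z) + (((-1 : F) * cb)) • u₁)) = 0 := by
    linear_combination (norm := (match_scalars <;> ring_nf <;> (try field_simp [h2, h4, h8, h16, h32, h64, h128, h256, h512, h1024, h2048, h4096, h8192, h16384, h32768]) <;> ring1)) t₀^3 • hA1 - hAt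
  have hR1 : ((((4 : F))) • ((u₁ * z) * w) + (((-2 : F))) • ((w * z) * u₁) + (((1 : F) * ca)) • (u₁ * z) + (((-1 : F) * cb)) • u₁) = 0 := by
    have h2' : ((t₀^3 - t₀)⁻¹ * (t₀^3 - t₀)) • (((((4 : F))) • ((u₁ * z) * w) + (((-2 : F))) • ((w * z) * u₁) + (((1 : F) * ca)) • (u₁ * z) + (((-1 : F) * cb)) • u₁)) = (t₀^3 - t₀)⁻¹ • (0:A) := by
      rw [mul_smul, hA0]
    rwa [inv_mul_cancel₀ htns, one_smul, smul_zero] at h2'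
  have Gpp1 := hid2 (u₁ + (1:F) • e + (1:F) • z)
  have Gpm1 := hid2 (u₁ + (1:F) • e + (-1:F) • z)
  have Gppt := hid2 (u₁ + (1:F) • e + t₀ • z)
  have Gpmt := hid2 (u₁ + (1:F) • e + (-t₀) • z)
  have Gmp1 := hid2 (u₁ + (-1:F) • e + (1:F) • z)
  have Gmm1 := hid2 (u₁ + (-1:F) • e + (-1:F) • z)
  have Gmpt := hid2 (u₁ + (-1:F) • e + t₀ • z)
  have Gmmt := hid2 (u₁ + (-1:F) • e + (-t₀) • z)
  simp only [mul_add, add_mul, smul_mul_assoc, mul_smul_comm, smul_smul, smul_add, smul_zero, mul_zero, zero_mul, add_zero, zero_add, he.idem, ef1, ef4, ef2, ef7, ef9, ef5, ef11, ef3, ef12, ef13, ef8, ef10, ef6, hz_z3, hz_z4, hz_w1, hz_w, hu₁, hz, hd_w, hd_z3, hd_z4, hd_z5, hd_z6, hd_z7, hd_z8, hd_z9, hd_z10, hd_z11, hm, hd_w1, hw1, cm1, cm2, cm3, cm4, cm5, cm6, cm7, cm8, cm9, cm10, cm11, cm12, cm13, cm14, cm15, cm16, cm17, cm18, cm19, cm20,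 cm21, cm22, cm23, cm24, cm25, cm26, cm27, cm28, cm29, cm30, cm31, cm32, cm33, cm34, cm35, cm36, cm37, cm38, cm39, cm40, cm41, cm42, cm43, cm44, cm45, cm46, cm47, cm48, cm49, cm50, cm51, cm52, cm53, cm54, cm55, cm56, cm57, cm58, cm59, cm60, cm61, cm62, cm63, cm64, cm65, cm66, cm67, cm68, cm69] at Gpp1 Gpm1 Gppt Gpmt Gmp1 Gmm1 Gmpt Gmmt
  have hS1 : ((((4 : F))) • ((u₁ * z) * w) + (((-1 : F))) • ((w * z) * u₁) + ((((1 : F)/2) * ca)) • (u₁ * z) + ((((-3 : F)/2) * cb)) • u₁) + ((((-4 : F))) • (((u₁ * z) * z) * z) + (((-1 : F))) • (((z * z) * u₁) * z) + (((2 : F))) • ((u₁ * z) * (z * z)) + ((((1 : F)/2))) • (((z * z) * z) * u₁)) = 0 := by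
    linear_combination (norm := (match_scalars <;> ring_nf <;> (try field_simp [h2, h4, h8, h16, h32, h64, h128, h256, h512, h1024, h2048, h4096, h8192, h16384, h32768]) <;> ring1)) ((4:F)⁻¹) • Gpp1 - ((4:F)⁻¹) • Gmp1 - ((4:F)⁻¹) • Gpm1 + ((4:F)⁻¹) • Gmm1
  have hSt : t₀ • ((((4 : F))) • ((u₁ * z) * w) + (((-1 : F))) • ((w * z) * u₁) + ((((1 : F)/2) * ca)) • (u₁ * z) + ((((-3 : F)/2) * cb)) • u₁) + t₀^3 • ((((-4 : F))) • (((u₁ * z) * z) * z) + (((-1 : F))) • (((z * z) * u₁) * z) + (((2 : F))) • ((u₁ * z) * (z * z)) + ((((1 : F)/2))) • (((z * z) * z) * u₁)) = 0 := by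
    linear_combination (norm := (match_scalars <;> ring_nf <;> (try field_simp [h2, h4, h8, h16, h32, h64, h128, h256, h512, h1024, h2048, h4096, h8192, h16384, h32768]) <;> ring1)) ((4:F)⁻¹) • Gppt - ((4:F)⁻¹) • Gmpt - ((4:F)⁻¹) • Gpmt + ((4:F)⁻¹) • Gmmt
  have hS0 : (t₀^3 - t₀) • (((((4 : F))) • ((u₁ * z) * w) + (((-1 : F))) • ((w * z) * u₁) + ((((1 : F)/2) * ca)) • (u₁ * z) + ((((-3 : F)/2) * cb)) • u₁)) = 0 := by
    linear_combination (norm := (match_scalars <;> ring_nf <;> (try field_simp [h2, h4, h8, h16, h32, h64, h128, h256, h512, h1024, h2048, h4096, h8192, h16384, h32768]) <;> ring1)) t₀^3 • hS1 - hSt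
  have hS : ((((4 : F))) • ((u₁ * z) * w) + (((-1 : F))) • ((w * z) * u₁) + ((((1 : F)/2) * ca)) • (u₁ * z) + ((((-3 : F)/2) * cb)) • u₁) = 0 := by
    have h2' : ((t₀^3 - t₀)⁻¹ * (t₀^3 - t₀)) • (((((4 : F))) • ((u₁ * z) * w) + (((-1 : F))) • ((w * z) * u₁) + ((((1 : F)/2) * ca)) • (u₁ * z) + ((((-3 : F)/2) * cb)) • u₁)) = (t₀^3 - t₀)⁻¹ • (0:A) := by
      rw [mul_smul, hS0]
    rwa [inv_mul_cancel₀ htns, one_smul, smul_zero] at h2'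
  have hfin : (u₁ * u₁) * (u₁ * z) = u₁ * ((u₁ * u₁) * z) := by
    simp only [mul_add, add_mul, smul_mul_assoc, mul_smul_comm, smul_smul, smul_add, smul_zero, mul_zero, zero_mul, add_zero, zero_add, he.idem, ef1, ef4, ef2, ef7, ef9, ef5, ef11, ef3, ef12, ef13, ef8, ef10, ef6, hz_z3, hz_z4, hz_w1, hz_w, hu₁, hz, hd_w, hd_z3, hd_z4, hd_z5, hd_z6, hd_z7, hd_z8, hd_z9, hd_z10, hd_z11, hm, hd_w1, hw1, cm1, cm2, cm3, cm4, cm5, cm6, cm7, cm8, cm9, cm10, cm11, cm12, cm13, cm14, cm15, cm16, cm17, cm18, cm19, cm20, cm21, cm22, cm23, cm24, cm25, cm26, cm27, cm28, cm29, cm30, cm31, cm32, cm33, cm34, cm35, cm36, cm37, cm38, cm39, cm40, cm41, cm42, cm43, cm44, cm45, cm46, cm47, cm48, cm49, cm50, cm51, cm52, cm53, cm54, cm55, cm56, cm57, cm58, cm59, cm60, cm61, cm62, cm63, cm64, cm65, cm66, cm67, cm68, cm69]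
    linear_combination (norm := (match_scalars <;> ring_nf <;> (try field_simp [h2, h4, h8, h16, h32, h64, h128, h256, h512, h1024, h2048, h4096, h8192, h16384, h32768]) <;> ring1)) ((3:F)/4) • hR1 - (2⁻¹:F) • hS
  exact hfin
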